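/- Interpolation from modular DRUP proofs: given a valid modular DRUP proof π of the unsatisfiability of Φ_s ∧ Φ_m in which every copied clause is over the shared (interface) variables, the formula Itp := ⋀_{c ∈ L_F(π)} ( ⋀ L_B(π^{id(c)}) ⇒ c ) is a Craig interpolant for (Φ_s, Φ_m): Itp is over the shared variables of Φ_s and Φ_m, Φ_s ⊨ Itp, and Itp ∧ Φ_m is unsatisfiable. -/

import Mathlib

/-- Propositional variables. -/
abbrev Var := ℕ
/-- A literal is a variable together with a polarity. -/
abbrev Lit := Var × Bool
/-- A clause is a finite set of literals. -/
abbrev Clause := Finset Lit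
/-- A total truth assignment. -/
abbrev Assignment := Var → Bool

/-- Negation of a literal. -/
def Lit.neg (l : Lit) : Lit := (l.1, !l.2)

/-- An assignment satisfies a literal. -/
def satLit (σ : Assignment) (l : Lit) : Prop := σ l.1 = l.2
/-- An assignment satisfies a clause (some literal is true). -/
def satClause (σ : Assignment) (C : Clause) : Prop := ∃ l ∈ C, satLit σ l
/-- An assignment satisfies a set of clauses. -/
def satSet (σ : Assignment) (Γ : Set Clause) : Prop := ∀ C ∈ Γ, satClause σ C
/-- Semantic consequence: every model of Γ satisfies C. -/
def entails (Γ : Set Clause) (C : Clause) : Prop :=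
  ∀ σ : Assignment, satSet σ Γ → satClause σ C

/-- Unit-propagation closure: the least set of literals containing the
assumptions `A` and closed under the unit-propagation rule for clauses of `Γ`:
if all literals of a clause but one are falsified (their negations derived),
the remaining literal is derived. -/
inductive UPC (Γ : Set Clause) (A : Set Lit) : Lit → Prop
  | assm {l : Lit} : l ∈ A → UPC Γ A l
  | prop {C : Clause} {l : Lit} : C ∈ Γ → l ∈ C →
      (∀ l' ∈ C, l' ≠ l → UPC Γ A (Lit.neg l')) → UPC Γ A l

/-- Unit propagation from `Γ` under assumptions `A` reaches a conflict:
some clause of `Γ` has all its literals falsified by the closure. -/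
def upConflict (Γ : Set Clause) (A : Set Lit) : Prop :=
  ∃ C ∈ Γ, ∀ l ∈ C, UPC Γ A (Lit.neg l)

/-- `RUP Γ C` (written `Γ ⊢_UP C`): unit propagation from `Γ` together with the
negations of the literals of `C` reaches a conflict. -/
def RUP (Γ : Set Clause) (C : Clause) : Prop :=
  upConflict Γ {l | ∃ m ∈ C, l = Lit.neg m}

/-- The two modules: secondary `s` and main `m`. -/
inductive ModIdx | s | m
deriving DecidableEq

/-- A step of a modular DRUP proof. -/
inductive MStep
  | asserted (idx : ModIdx) (c : Clause)
  | rup (idx : ModIdx) (c : Clause)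
  | cp (src dst : ModIdx) (c : Clause)
  | del (idx : ModIdx) (c : Clause)
deriving DecidableEq

/-- A step adds clause `c` to module `idx` (by assertion, rup, or copy into `idx`). -/
def MStep.addsTo : MStep → ModIdx → Clause → Prop
  | .asserted i c, j, d => i = j ∧ c = d
  | .rup i c, j, d => i = j ∧ c = d
  | .cp _ i c, j, d => i = j ∧ c = d
  | .del _ _, _, _ => False

/-- Active clauses of module `idx`: added to `idx` and not later deleted from `idx`. -/
def mactive (π : List MStep) (idx : ModIdx) : Set Clause :=
  {c | ∃ i, ∃ hi : i < π.length, (π[i]'hi).addsTo idx c ∧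
      ∀ k, ∀ hk : k < π.length, i < k → (π[k]'hk) ≠ MStep.del idx c}

/-- All clauses asserted into module `idx`. -/
def allasserted (π : List MStep) (idx : ModIdx) : Set Clause :=
  {c | MStep.asserted idx c ∈ π}

/-- Validity of a modular DRUP proof: every rup step is RUP w.r.t. the active
clauses of its module, every copy step's clause is RUP in its source module,
and the final step adds ⊥ to module `m` (by rup or by copy from `s`). -/
def validModular (π : List MStep) : Prop :=
  (∀ i, ∀ hi : i < π.length, ∀ idx c,
      (π[i]'hi) = MStep.rup idx c → RUP (mactive (π.take i) idx) c) ∧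
  (∀ i, ∀ hi : i < π.length, ∀ src dst c,
      (π[i]'hi) = MStep.cp src dst c → RUP (mactive (π.take i) src) c) ∧
  ∃ hne : π ≠ [],
    π.getLast hne = MStep.rup ModIdx.m ∅ ∨ π.getLast hne = MStep.cp ModIdx.s ModIdx.m ∅

/-- The proof contains no deletion steps. -/
def noDel (π : List MStep) : Prop := ∀ st ∈ π, ∀ idx c, st ≠ MStep.del idx c

/-- Backward clauses of a prefix: clauses copied from `m` to `s`. -/
def LB (π : List MStep) : Set Clause := {c | MStep.cp ModIdx.m ModIdx.s c ∈ π}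
/-- Forward clauses of a prefix: clauses copied from `s` to `m`. -/
def LF (π : List MStep) : Set Clause := {c | MStep.cp ModIdx.s ModIdx.m c ∈ π}

/-- Variables occurring in a clause. -/
def clauseVars (C : Clause) : Set Var := {v | ∃ b : Bool, (v, b) ∈ C}
/-- Variables occurring in a set of clauses. -/
def setVars (Γ : Set Clause) : Set Var := ⋃ C ∈ Γ, clauseVars C

/-- `i` is the position of the first copy step from `s` to `m` for clause `c`. -/
def firstCpF (π : List MStep) (c : Clause) (i : ℕ) : Prop :=
  ∃ hi : i < π.length, (π[i]'hi) = MStep.cp ModIdx.s ModIdx.m c ∧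
    ∀ j, ∀ hj : j < π.length, j < i → (π[j]'hj) ≠ MStep.cp ModIdx.s ModIdx.m c

/-- The interpolant `⋀_{c ∈ L_F(π)} (⋀ L_B(π^{id(c)}) ⇒ c)` holds under `σ`. -/
def satItp (π : List MStep) (σ : Assignment) : Prop :=
  ∀ c : Clause, ∀ i, firstCpF π c i →
    (∀ b ∈ LB (π.take i), satClause σ b) → satClause σ c

lemma upc_sound {Γ : Set Clause} {A : Set Lit} {σ : Assignment}
    (hΓ : satSet σ Γ) (hA : ∀ l ∈ A, satLit σ l) :
    ∀ l, UPC Γ A l → satLit σ l := by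
  intro l h
  induction h with
  | assm h => exact hA _ h
  | @prop C l hC hl hup ih =>
    obtain ⟨l'', hl'', hsat⟩ := hΓ _ hC
    by_cases he : l'' = l
    · subst he; exact hsat
    · exfalso
      have h2 := ih _ hl'' he
      simp only [satLit, Lit.neg] at h2 hsat
      rw [hsat] at h2
      cases l''.2 <;> simp at h2

lemma rup_sound {Γ : Set Clause} {C : Clause} (h : RUP Γ C) : entails Γ C := by
  intro σ hΓ
  by_contra hnc
  obtain ⟨D, hD, hall⟩ := h
  have hA : ∀ l ∈ {l | ∃ m ∈ C, l = Lit.neg m}, satLit σ l := by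
    rintro l ⟨m, hm, rfl⟩
    have hns : ¬ satLit σ m := fun hs => hnc ⟨m, hm, hs⟩
    simp only [satLit, Lit.neg] at *
    cases hb : σ m.1 <;> cases hmb : m.2 <;> simp_all
  obtain ⟨l, hl, hsat⟩ := hΓ _ hD
  have h2 := upc_sound hΓ hA _ (hall _ hl)
  simp only [satLit, Lit.neg] at h2 hsat
  rw [hsat] at h2
  cases l.2 <;> simp at h2

lemma mem_mactive_take {π : List MStep} (hnd : noDel π) {k : ℕ} {idx : ModIdx} {c : Clause} :
    c ∈ mactive (π.take k) idx ↔
      ∃ i, ∃ hi : i < π.length, i < k ∧ (π[i]'hi).addsTo idx c := by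
  constructor
  · rintro ⟨i, hi, hadd, -⟩
    have hlen : i < k ⊓ π.length := by simpa [List.length_take] using hi
    refine ⟨i, lt_of_lt_of_le hlen inf_le_right, lt_of_lt_of_le hlen inf_le_left, ?_⟩
    rwa [List.getElem_take] at hadd
  · rintro ⟨i, hi, hik, hadd⟩
    have hi' : i < (π.take k).length := by simp [List.length_take]; omega
    refine ⟨i, hi', by rwa [List.getElem_take], ?_⟩
    intro j hj _
    have hmem : (π.take k)[j] ∈ π := by
      rw [List.getElem_take]
      exact List.getElem_mem _
    exact hnd _ hmem idx c

lemma mem_LB_take {π : List MStep} {k : ℕ} {b : Clause} :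
    b ∈ LB (π.take k) ↔
      ∃ i, ∃ hi : i < π.length, i < k ∧ (π[i]'hi) = MStep.cp ModIdx.m ModIdx.s b := by
  constructor
  · intro hb
    obtain ⟨i, hi, hget⟩ := List.getElem_of_mem hb
    have hlen : i < k ⊓ π.length := by simpa [List.length_take] using hi
    refine ⟨i, lt_of_lt_of_le hlen inf_le_right, lt_of_lt_of_le hlen inf_le_left, ?_⟩
    rwa [List.getElem_take] at hget
  · rintro ⟨i, hi, hik, hget⟩
    have hi' : i < (π.take k).length := by simp [List.length_take]; omega
    have : (π.take k)[i] = MStep.cp ModIdx.m ModIdx.s b := by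
      rw [List.getElem_take]; exact hget
    show MStep.cp ModIdx.m ModIdx.s b ∈ π.take k
    rw [← this]
    exact List.getElem_mem _

/-- Key induction for the secondary module. -/
lemma main_s {π : List MStep} {Φs : Set Clause}
    (hval : validModular π) (hnd : noDel π) (hs : allasserted π ModIdx.s ⊆ Φs)
    {σ : Assignment} (hσ : satSet σ Φs) :
    ∀ k, (∀ b ∈ LB (π.take k), satClause σ b) →
      satSet σ (mactive (π.take k) ModIdx.s) := by
  intro k
  induction k using Nat.strong_induction_on with
  | _ k ih =>
    intro hLB C hC
    obtain ⟨i, hi, hik, hadd⟩ := (mem_mactive_take hnd).1 hC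
    match hst : (π[i]'hi) with
    | .asserted idx c =>
      rw [hst] at hadd
      obtain ⟨rfl, rfl⟩ := hadd
      exact hσ _ (hs (show MStep.asserted ModIdx.s c ∈ π from hst ▸ List.getElem_mem hi))
    | .rup idx c =>
      rw [hst] at hadd
      obtain ⟨rfl, rfl⟩ := hadd
      have hrup := hval.1 i hi _ _ hst
      refine rup_sound hrup σ (ih i (by omega) ?_)
      intro b hb
      exact hLB b (by
        obtain ⟨p, hp, hpk, hget⟩ := mem_LB_take.1 hb
        exact mem_LB_take.2 ⟨p, hp, by omega, hget⟩)
    | .cp src dst c =>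
      rw [hst] at hadd
      obtain ⟨rfl, rfl⟩ := hadd
      have hrup := hval.2.1 i hi _ _ _ hst
      cases src with
      | m =>
        exact hLB c (mem_LB_take.2 ⟨i, hi, hik, hst⟩)
      | s =>
        refine rup_sound hrup σ (ih i (by omega) ?_)
        intro b hb
        obtain ⟨p, hp, hpk, hget⟩ := mem_LB_take.1 hb
        exact hLB b (mem_LB_take.2 ⟨p, hp, by omega, hget⟩)
    | .del idx c => exact absurd hst (hnd _ (List.getElem_mem _) idx c)

/-- Existence of a first forward-copy step. -/
lemma exists_firstCpF {π : List MStep} {c : Clause} {i : ℕ} (hi : i < π.length)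
    (hget : (π[i]'hi) = MStep.cp ModIdx.s ModIdx.m c) :
    ∃ j, j ≤ i ∧ firstCpF π c j := by
  classical
  have hex : ∃ n, ∃ hn : n < π.length, (π[n]'hn) = MStep.cp ModIdx.s ModIdx.m c := ⟨i, hi, hget⟩
  haveI : DecidablePred fun n => ∃ hn : n < π.length,
      (π[n]'hn) = MStep.cp ModIdx.s ModIdx.m c := fun _ => Classical.dec _
  obtain ⟨hn, hget'⟩ := Nat.find_spec hex
  refine ⟨Nat.find hex, Nat.find_min' hex ⟨hi, hget⟩, hn, hget', ?_⟩
  intro j hj hji hne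
  exact Nat.find_min hex hji ⟨hj, hne⟩

/-- Key induction for the main module. -/
lemma main_m {π : List MStep} {Φm : Set Clause}
    (hval : validModular π) (hnd : noDel π) (hm : allasserted π ModIdx.m ⊆ Φm)
    {σ : Assignment} (hσ : satSet σ Φm) (hitp : satItp π σ) :
    ∀ k, satSet σ (mactive (π.take k) ModIdx.m) := by
  intro k
  induction k using Nat.strong_induction_on with
  | _ k ih =>
    intro C hC
    obtain ⟨i, hi, hik, hadd⟩ := (mem_mactive_take hnd).1 hC
    match hst : (π[i]'hi) with
    | .asserted idx c =>
      rw [hst] at hadd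
      obtain ⟨rfl, rfl⟩ := hadd
      exact hσ _ (hm (show MStep.asserted ModIdx.m c ∈ π from hst ▸ List.getElem_mem hi))
    | .rup idx c =>
      rw [hst] at hadd
      obtain ⟨rfl, rfl⟩ := hadd
      exact rup_sound (hval.1 i hi _ _ hst) σ (ih i (by omega))
    | .cp src dst c =>
      rw [hst] at hadd
      obtain ⟨rfl, rfl⟩ := hadd
      have hrup := hval.2.1 i hi _ _ _ hst
      cases src with
      | m => exact rup_sound hrup σ (ih i (by omega))
      | s =>
        obtain ⟨j, hji, hfirst⟩ := exists_firstCpF hi hst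
        refine hitp c j hfirst ?_
        intro b hb
        obtain ⟨p, hp, hpj, hget⟩ := mem_LB_take.1 hb
        have hrupb := hval.2.1 p hp _ _ _ hget
        exact rup_sound hrupb σ (ih p (by omega))
    | .del idx c => exact absurd hst (hnd _ (List.getElem_mem _) idx c)

lemma satClause_agree {σ σ' : Assignment} {C : Clause}
    (h : ∀ v ∈ clauseVars C, σ v = σ' v) :
    satClause σ C ↔ satClause σ' C := by
  unfold satClause satLit
  constructor <;> rintro ⟨l, hl, hs⟩ <;> refine ⟨l, hl, ?_⟩
  · rw [← h l.1 ⟨l.2, hl⟩]; exact hs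
  · rw [h l.1 ⟨l.2, hl⟩]; exact hs

lemma satItp_agree {π : List MStep} {Φs Φm : Set Clause}
    (hshared : ∀ i, ∀ hi : i < π.length, ∀ src dst cls,
        (π[i]'hi) = MStep.cp src dst cls →
        clauseVars cls ⊆ setVars Φs ∩ setVars Φm)
    {σ σ' : Assignment} (hag : ∀ v ∈ setVars Φs ∩ setVars Φm, σ v = σ' v)
    (h : satItp π σ) : satItp π σ' := by
  intro c i hfirst hLB
  obtain ⟨hi, hget, hmin⟩ := hfirst
  have hfirst : firstCpF π c i := ⟨hi, hget, hmin⟩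
  have hcvars := hshared i hi _ _ _ hget
  rw [← satClause_agree (fun v hv => hag v (hcvars hv))]
  refine h c i hfirst ?_
  intro b hb
  obtain ⟨p, hp, hpi, hgetb⟩ := mem_LB_take.1 hb
  have hbvars := hshared p hp _ _ _ hgetb
  rw [satClause_agree (fun v hv => hag v (hbvars hv))]
  exact hLB b hb

/-- the formula `⋀_{c ∈ L_F(π)} (⋀ L_B(π^{id(c)}) ⇒ c)` extracted
from a valid modular DRUP proof whose copied clauses are over the shared
variables is a Craig interpolant for `(Φs, Φm)`: it depends only on the shared
variables, is entailed by `Φs`, and is inconsistent with `Φm`. -/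
theorem modular_drup_interpolation (π : List MStep) (Φs Φm : Set Clause)
    (hval : validModular π) (hnd : noDel π)
    (hs : allasserted π ModIdx.s ⊆ Φs) (hm : allasserted π ModIdx.m ⊆ Φm)
    (hshared : ∀ i, ∀ hi : i < π.length, ∀ src dst cls,
        (π[i]'hi) = MStep.cp src dst cls →
        clauseVars cls ⊆ setVars Φs ∩ setVars Φm) :
    (∀ σ σ' : Assignment, (∀ v ∈ setVars Φs ∩ setVars Φm, σ v = σ' v) →
        (satItp π σ ↔ satItp π σ')) ∧
    (∀ σ : Assignment, satSet σ Φs → satItp π σ) ∧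
    ¬ ∃ σ : Assignment, satItp π σ ∧ satSet σ Φm := by
  refine ⟨?_, ?_, ?_⟩
  · intro σ σ' hag
    exact ⟨satItp_agree hshared hag,
      satItp_agree hshared (fun v hv => (hag v hv).symm)⟩
  · intro σ hσ c i hfirst hLB
    obtain ⟨hi, hget, -⟩ := hfirst
    have hrup := hval.2.1 i hi _ _ _ hget
    exact rup_sound hrup σ (main_s hval hnd hs hσ i hLB)
  · rintro ⟨σ, hitp, hσm⟩
    have hmain := main_m hval hnd hm hσm hitp π.length
    obtain ⟨hne, hlast⟩ := hval.2.2
    have hlen : 0 < π.length := List.length_pos_iff.2 hne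
    have hlt : π.length - 1 < π.length := by omega
    have hlast' : π.getLast hne = π[π.length - 1]'hlt := List.getLast_eq_getElem hne
    have hadds : (π[π.length - 1]'hlt).addsTo ModIdx.m ∅ := by
      rcases hlast with h | h <;> rw [← hlast', h] <;> exact ⟨rfl, rfl⟩
    have hmem : (∅ : Clause) ∈ mactive (π.take π.length) ModIdx.m :=
      (mem_mactive_take hnd).2 ⟨π.length - 1, hlt, by omega, hadds⟩
    obtain ⟨l, hl, -⟩ := hmain _ hmem
    exact absurd hl (Finset.notMem_empty l)
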